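/- Let S be a spider on n vertices of type (a_1, …, a_h), where v is its unique vertex of degree ≥ 3, h = ecc(v), and a_i is the number of vertices of S at distance i from v. Then in every legal rectilinear drawing of S, the number of crossing pairs of edges is at most C(n−1, 2) − Σ_{u ∈ V(S)} C(d(u), 2) − Σ_{i=2}^{h} ( C(⌊a_i/2⌋, 2) + C(⌈a_i/2⌉, 2) ). -/

import Mathlib

open Finset

/-- The open straight-line segment drawn for the edge `e` under the drawing `f`. -/
def edgeSeg {V : Type*} (f : V → ℝ × ℝ) (e : Sym2 V) : Set (ℝ × ℝ) :=
  Sym2.lift ⟨fun u v => openSegment ℝ (f u) (f v),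
    fun u v => openSegment_symm ℝ (f u) (f v)⟩ e

/-- A legal rectilinear drawing of the graph `G`: an injective placement of the vertices in
the plane such that no edge passes through (the image of) a vertex it is not incident with,
and no three (open) edge segments pass through a common point. -/
def IsLegalDrawing {V : Type*} (G : SimpleGraph V) (f : V → ℝ × ℝ) : Prop :=
  Function.Injective f ∧
  (∀ u v x : V, G.Adj u v → x ≠ u → x ≠ v → f x ∉ openSegment ℝ (f u) (f v)) ∧
  ∀ (p : ℝ × ℝ) (e₁ e₂ e₃ : Sym2 V), e₁ ∈ G.edgeSet → e₂ ∈ G.edgeSet → e₃ ∈ G.edgeSet →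
    e₁ ≠ e₂ → e₁ ≠ e₃ → e₂ ≠ e₃ →
    ¬ (p ∈ edgeSeg f e₁ ∧ p ∈ edgeSeg f e₂ ∧ p ∈ edgeSeg f e₃)

/-- The number of crossing pairs of edges in the drawing `f` of `G`: the number of unordered
pairs (two-element sets) `{e₁, e₂}` of edges sharing no endpoint whose drawn open segments
intersect. -/
noncomputable def crossCount {V : Type*} (G : SimpleGraph V) (f : V → ℝ × ℝ) : ℕ :=
  Set.ncard {s : Set (Sym2 V) | ∃ e₁ e₂ : Sym2 V,
    e₁ ∈ G.edgeSet ∧ e₂ ∈ G.edgeSet ∧ (∀ x, x ∈ e₁ → x ∉ e₂) ∧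
    (edgeSeg f e₁ ∩ edgeSeg f e₂).Nonempty ∧ s = {e₁, e₂}}



noncomputable section SpiderAux

/-- 2D cross product of `b - a` and `c - a`. -/
def crp (a b c : ℝ × ℝ) : ℝ :=
  (b.1 - a.1) * (c.2 - a.2) - (b.2 - a.2) * (c.1 - a.1)

lemma crp_self_right (a b : ℝ × ℝ) : crp a b b = 0 := by unfold crp; ring

lemma crp_self_left (a b : ℝ × ℝ) : crp a b a = 0 := by unfold crp; ring

/-- helper : α·P + β·Q = 0 with P,Q > 0 forces (0,0) or opposite signs. -/
lemma sign2 {α β P Q : ℝ} (h : α * P + β * Q = 0) (hP : 0 < P) (hQ : 0 < Q) :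
    (α = 0 ∧ β = 0) ∨ α * β < 0 := by
  rcases lt_trichotomy α 0 with h1 | h1 | h1
  · right
    have : 0 < β := by nlinarith
    nlinarith
  · left
    constructor
    · exact h1
    · nlinarith
  · right
    have : β < 0 := by nlinarith
    nlinarith

/-- The core impossibility lemma: three "oriented" segments (w j, z j) with nonzero
orientation scalars s j such that, for every j ≠ k, the line through segment j has
w k strictly on the negative side and z k strictly on the positive side (w.r.t. s j). -/
lemma lemBs (w1 z1 w2 z2 w3 z3 : ℝ × ℝ) (s1 s2 s3 : ℝ)
    (h12w : s1 * crp w1 z1 w2 < 0) (h12z : 0 < s1 * crp w1 z1 z2)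
    (h13w : s1 * crp w1 z1 w3 < 0) (h13z : 0 < s1 * crp w1 z1 z3)
    (h21w : s2 * crp w2 z2 w1 < 0) (h21z : 0 < s2 * crp w2 z2 z1)
    (h23w : s2 * crp w2 z2 w3 < 0) (h23z : 0 < s2 * crp w2 z2 z3)
    (h31w : s3 * crp w3 z3 w1 < 0) (h31z : 0 < s3 * crp w3 z3 z1)
    (h32w : s3 * crp w3 z3 w2 < 0) (h32z : 0 < s3 * crp w3 z3 z2) : False := by
  set P1 := s1 * (z1.1 - w1.1) with hP1
  set Q1 := s1 * (z1.2 - w1.2) with hQ1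
  set P2 := s2 * (z2.1 - w2.1) with hP2
  set Q2 := s2 * (z2.2 - w2.2) with hQ2
  set P3 := s3 * (z3.1 - w3.1) with hP3
  set Q3 := s3 * (z3.2 - w3.2) with hQ3
  -- p1 ≠ 0
  have hp1 : ¬(P1 = 0 ∧ Q1 = 0) := by
    rintro ⟨hP, hQ⟩
    have he : s1 * crp w1 z1 z2 = P1 * (z2.2 - w1.2) - Q1 * (z2.1 - w1.1) := by
      rw [hP1, hQ1]; unfold crp; ring
    rw [hP, hQ] at he
    linarith
  -- find a nontrivial dependency α p1 + β p2 + γ p3 = 0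
  have key : ∃ α β γ : ℝ, ¬(α = 0 ∧ β = 0 ∧ γ = 0) ∧
      α * P1 + β * P2 + γ * P3 = 0 ∧ α * Q1 + β * Q2 + γ * Q3 = 0 := by
    by_cases h12 : P1 * Q2 - P2 * Q1 ≠ 0
    · refine ⟨P2 * Q3 - P3 * Q2, P3 * Q1 - P1 * Q3, P1 * Q2 - P2 * Q1, ?_, by ring, by ring⟩
      rintro ⟨-, -, h⟩; exact h12 h
    · by_cases h13 : P1 * Q3 - P3 * Q1 ≠ 0
      · refine ⟨P2 * Q3 - P3 * Q2, P3 * Q1 - P1 * Q3, P1 * Q2 - P2 * Q1, ?_, by ring, by ring⟩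
        rintro ⟨-, h, -⟩; apply h13; linarith
      · push_neg at h12 h13
        by_cases hp : P1 ≠ 0
        · refine ⟨P2, -P1, 0, ?_, by ring, by linear_combination -h12⟩
          rintro ⟨-, h, -⟩; apply hp; linarith
        · push_neg at hp
          have hq : Q1 ≠ 0 := by intro h; exact hp1 ⟨hp, h⟩
          refine ⟨Q2, -Q1, 0, ?_, by linear_combination h12, by ring⟩
          rintro ⟨-, h, -⟩; apply hq; linarith
  obtain ⟨α, β, γ, hnt, hPe, hQe⟩ := key
  -- evaluation differences
  have hD : ∀ (wj zj : ℝ × ℝ),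
      α * (s1 * crp w1 z1 zj - s1 * crp w1 z1 wj)
      + β * (s2 * crp w2 z2 zj - s2 * crp w2 z2 wj)
      + γ * (s3 * crp w3 z3 zj - s3 * crp w3 z3 wj) = 0 := by
    intro wj zj
    have e1 : s1 * crp w1 z1 zj - s1 * crp w1 z1 wj
        = P1 * (zj.2 - wj.2) - Q1 * (zj.1 - wj.1) := by rw [hP1, hQ1]; unfold crp; ring
    have e2 : s2 * crp w2 z2 zj - s2 * crp w2 z2 wj
        = P2 * (zj.2 - wj.2) - Q2 * (zj.1 - wj.1) := by rw [hP2, hQ2]; unfold crp; ring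
    have e3 : s3 * crp w3 z3 zj - s3 * crp w3 z3 wj
        = P3 * (zj.2 - wj.2) - Q3 * (zj.1 - wj.1) := by rw [hP3, hQ3]; unfold crp; ring
    rw [e1, e2, e3]
    linear_combination (zj.2 - wj.2) * hPe - (zj.1 - wj.1) * hQe
  -- rows
  have R1 := hD w1 z1
  have R2 := hD w2 z2
  have R3 := hD w3 z3
  rw [crp_self_right, crp_self_left] at R1 R2 R3
  simp only [mul_zero, sub_zero, zero_sub] at R1 R2 R3
  -- R1: α * (s1*0 - s1*0) + β (...) + γ (...) = 0
  have r1 : β * (s2 * crp w2 z2 z1 - s2 * crp w2 z2 w1)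
      + γ * (s3 * crp w3 z3 z1 - s3 * crp w3 z3 w1) = 0 := by linarith [R1]
  have r2 : α * (s1 * crp w1 z1 z2 - s1 * crp w1 z1 w2)
      + γ * (s3 * crp w3 z3 z2 - s3 * crp w3 z3 w2) = 0 := by linarith [R2]
  have r3 : α * (s1 * crp w1 z1 z3 - s1 * crp w1 z1 w3)
      + β * (s2 * crp w2 z2 z3 - s2 * crp w2 z2 w3) = 0 := by linarith [R3]
  have c1 := sign2 r1 (by linarith) (by linarith)
  have c2 := sign2 r2 (by linarith) (by linarith)
  have c3 := sign2 r3 (by linarith) (by linarith)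
  rcases c1 with ⟨hb, hc⟩ | hbc
  · rcases c2 with ⟨ha, hc'⟩ | hac
    · exact hnt ⟨ha, hb, hc⟩
    · rw [hc] at hac; simp at hac
  · rcases c2 with ⟨ha, hc⟩ | hac
    · rw [hc] at hbc; simp at hbc
    · rcases c3 with ⟨ha, hb⟩ | hab
      · rw [ha] at hac; simp at hac
      · have n1 : 0 < (α*β)*(α*γ) := mul_pos_of_neg_of_neg hab hac
        have n2 : (α*β)*(α*γ)*(β*γ) < 0 := mul_neg_of_pos_of_neg n1 hbc
        nlinarith [sq_nonneg (α*β*γ)]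

end SpiderAux


noncomputable section SpiderAux2

lemma smul_cancel_param {u : ℝ × ℝ} (hu : u ≠ 0) {A : ℝ × ℝ} {x y : ℝ}
    (h : A + x • u = A + y • u) : x = y := by
  have h2 : (x - y) • u = 0 := by
    have := add_left_cancel h
    rw [sub_smul, this, sub_self]
  rcases smul_eq_zero.mp h2 with h3 | h3
  · linarith [sub_eq_zero.mp h3]
  · exact absurd h3 hu

lemma mem_seg_param {u : ℝ × ℝ} (hu : u ≠ 0) {A X Y P : ℝ × ℝ} {c d y : ℝ}
    (hX : X = A + c • u) (hY : Y = A + d • u) (hP : P = A + y • u) :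
    P ∈ openSegment ℝ X Y ↔ ∃ θ : ℝ, 0 < θ ∧ θ < 1 ∧ y = c + θ * (d - c) := by
  subst hX hY hP
  rw [openSegment_eq_image']
  simp only [Set.mem_image, Set.mem_Ioo]
  constructor
  · rintro ⟨θ, ⟨h0, h1⟩, heq⟩
    refine ⟨θ, h0, h1, ?_⟩
    have heq2 : A + (c + θ * (d - c)) • u = A + y • u := by
      rw [← heq]
      module
    exact (smul_cancel_param hu heq2).symm
  · rintro ⟨θ, h0, h1, hy⟩
    refine ⟨θ, ⟨h0, h1⟩, ?_⟩
    rw [hy]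
    module

lemma collin_param {A B C : ℝ × ℝ} (hAB : A ≠ B) (h : crp A B C = 0) :
    ∃ c : ℝ, C = A + c • (B - A) := by
  set u := B - A with hu
  have hune : u ≠ 0 := sub_ne_zero.mpr (Ne.symm hAB)
  have hn : u.1 ≠ 0 ∨ u.2 ≠ 0 := by
    by_contra hc
    push_neg at hc
    exact hune (Prod.ext hc.1 hc.2)
  have hcr : u.1 * (C.2 - A.2) = u.2 * (C.1 - A.1) := by
    unfold crp at h; rw [hu]; simp only [Prod.fst_sub, Prod.snd_sub]; linarith [h]
  rcases hn with h1 | h2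
  · refine ⟨(C.1 - A.1) / u.1, ?_⟩
    apply Prod.ext
    · simp only [Prod.fst_add, Prod.smul_fst, smul_eq_mul]
      field_simp
      ring
    · simp only [Prod.snd_add, Prod.smul_snd, smul_eq_mul]
      field_simp
      nlinarith [hcr]
  · refine ⟨(C.2 - A.2) / u.2, ?_⟩
    apply Prod.ext
    · simp only [Prod.fst_add, Prod.smul_fst, smul_eq_mul]
      field_simp
      nlinarith [hcr]
    · simp only [Prod.snd_add, Prod.smul_snd, smul_eq_mul]
      field_simp
      ring

lemma proper_cross {A B C D : ℝ × ℝ}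
    (hAB : A ≠ B) (hCD : C ≠ D) (hCA : C ≠ A) (hCB : C ≠ B) (hDA : D ≠ A) (hDB : D ≠ B)
    (hC : C ∉ openSegment ℝ A B) (hD : D ∉ openSegment ℝ A B)
    (hA : A ∉ openSegment ℝ C D) (hB : B ∉ openSegment ℝ C D)
    (hx : (openSegment ℝ A B ∩ openSegment ℝ C D).Nonempty) :
    crp A B C * crp A B D < 0 := by
  obtain ⟨p, hpAB, hpCD⟩ := hx
  have hpAB' := hpAB
  have hpCD' := hpCD
  rw [openSegment_eq_image'] at hpAB' hpCD'
  obtain ⟨t, ht, hpt⟩ := hpAB'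
  obtain ⟨σ, hσ, hpσ⟩ := hpCD'
  simp only at hpt hpσ
  have hp1 : p.1 = A.1 + t * (B.1 - A.1) := by
    rw [← hpt]; simp [smul_eq_mul]
  have hp2 : p.2 = A.2 + t * (B.2 - A.2) := by
    rw [← hpt]; simp [smul_eq_mul]
  have hq1 : p.1 = C.1 + σ * (D.1 - C.1) := by
    rw [← hpσ]; simp [smul_eq_mul]
  have hq2' : p.2 = C.2 + σ * (D.2 - C.2) := by
    rw [← hpσ]; simp [smul_eq_mul]
  have key : (1 - σ) * crp A B C + σ * crp A B D = 0 := by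
    have h0 : crp A B p = 0 := by
      unfold crp; rw [hp1, hp2]; ring
    unfold crp at h0 ⊢
    rw [hq1, hq2'] at h0
    linear_combination h0
  rcases eq_or_ne (crp A B C) 0 with hzC | hzC
  · -- degenerate collinear case: contradiction with legality
    exfalso
    have hzD : crp A B D = 0 := by
      have h' : σ * crp A B D = 0 := by rw [hzC] at key; linarith
      rcases mul_eq_zero.mp h' with h | h
      · exfalso; exact absurd h (by linarith [hσ.1])
      · exact h
    set u := B - A with hudef
    have hune : u ≠ 0 := sub_ne_zero.mpr (Ne.symm hAB)
    obtain ⟨c, hc⟩ := collin_param hAB hzC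
    obtain ⟨d, hd⟩ := collin_param hAB hzD
    have hA0 : A = A + (0:ℝ) • u := by module
    have hB1 : B = A + (1:ℝ) • u := by rw [hudef]; module
    have hpu : p = A + t • u := by
      rw [hudef, ← hpt]
    -- scalar facts
    have hc0 : c ≠ 0 := by
      intro h; apply hCA; rw [hc, h]; simp
    have hc1 : c ≠ 1 := by
      intro h; apply hCB; rw [hc, h, ← hB1]
    have hd0 : d ≠ 0 := by
      intro h; apply hDA; rw [hd, h]; simp
    have hd1 : d ≠ 1 := by
      intro h; apply hDB; rw [hd, h, ← hB1]
    have hcd : c ≠ d := by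
      intro h; apply hCD; rw [hc, hd, h]
    have hcR : ¬(0 < c ∧ c < 1) := by
      rintro ⟨h0, h1⟩
      exact hC ((mem_seg_param hune hA0 hB1 hc).mpr ⟨c, h0, h1, by ring⟩)
    have hdR : ¬(0 < d ∧ d < 1) := by
      rintro ⟨h0, h1⟩
      exact hD ((mem_seg_param hune hA0 hB1 hd).mpr ⟨d, h0, h1, by ring⟩)
    have hAs : ∀ θ : ℝ, 0 < θ → θ < 1 → (0:ℝ) ≠ c + θ * (d - c) := by
      intro θ h0 h1 heq
      exact hA ((mem_seg_param hune hc hd hA0).mpr ⟨θ, h0, h1, heq⟩)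
    have hBs : ∀ θ : ℝ, 0 < θ → θ < 1 → (1:ℝ) ≠ c + θ * (d - c) := by
      intro θ h0 h1 heq
      exact hB ((mem_seg_param hune hc hd hB1).mpr ⟨θ, h0, h1, heq⟩)
    obtain ⟨θ, hθ0, hθ1, hθeq⟩ := (mem_seg_param hune hc hd hpu).mp hpCD
    have hcase_c : c < 0 ∨ 1 < c := by
      rcases lt_trichotomy c 0 with h | h | h
      · left; exact h
      · exact absurd h hc0
      · rcases lt_trichotomy c 1 with h' | h' | h'
        · exact absurd ⟨h, h'⟩ hcR
        · exact absurd h' hc1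
        · right; exact h'
    have hcase_d : d < 0 ∨ 1 < d := by
      rcases lt_trichotomy d 0 with h | h | h
      · left; exact h
      · exact absurd h hd0
      · rcases lt_trichotomy d 1 with h' | h' | h'
        · exact absurd ⟨h, h'⟩ hdR
        · exact absurd h' hd1
        · right; exact h'
    rcases lt_or_gt_of_ne hcd with hlt | hgt
    · -- c < d, t strictly between c and d
      have htc : c < t ∧ t < d := by
        constructor <;> nlinarith [hθ0, hθ1, hθeq]
      rcases hcase_c with h | h
      · rcases hcase_d with h' | h'
        · linarith [ht.1, htc.2]
        · -- c < 0 < 1 < d : value 0 is attained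
          have hdc : d - c ≠ 0 := by intro hh; apply hcd; linarith
          have hden : (0:ℝ) < d - c := by linarith
          have h0θ : (0:ℝ) < -c / (d - c) := by
            apply div_pos <;> linarith
          have h1θ : -c / (d - c) < 1 := by
            rw [div_lt_one hden]; linarith
          have heq0 : (0:ℝ) = c + (-c / (d - c)) * (d - c) := by
            rw [div_mul_cancel₀ _ hdc]; ring
          exact hAs (-c / (d - c)) h0θ h1θ heq0
      · linarith [ht.2, htc.1]
    · -- d < c
      have htc : d < t ∧ t < c := by
        constructor <;> nlinarith [hθ0, hθ1, hθeq]
      rcases hcase_d with h | h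
      · rcases hcase_c with h' | h'
        · linarith [ht.1, htc.2]
        · -- d < 0 < 1 < c : value 1 is attained
          have hdc : d - c ≠ 0 := by intro hh; apply hcd; linarith
          have hden : d - c < 0 := by linarith
          have h0θ : (0:ℝ) < (1 - c) / (d - c) := by
            rw [div_pos_iff]
            right
            constructor <;> linarith
          have h1θ : (1 - c) / (d - c) < 1 := by
            rw [div_lt_iff_of_neg hden]; linarith
          have heq1 : (1:ℝ) = c + ((1 - c) / (d - c)) * (d - c) := by
            rw [div_mul_cancel₀ _ hdc]; ring
          exact hBs ((1 - c) / (d - c)) h0θ h1θ heq1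
      · linarith [ht.2, htc.1]
  · -- nondegenerate: strict sign product
    have hzD : crp A B D ≠ 0 := by
      intro h
      rw [h] at key
      have h' : (1 - σ) * crp A B C = 0 := by linarith
      rcases mul_eq_zero.mp h' with h'' | h''
      · have : σ = 1 := by linarith
        linarith [hσ.2]
      · exact hzC h''
    rcases lt_or_gt_of_ne hzC with hC0 | hC0
    · rcases lt_or_gt_of_ne hzD with hD0 | hD0
      · nlinarith [key, hσ.1, hσ.2]
      · nlinarith
    · rcases lt_or_gt_of_ne hzD with hD0 | hD0
      · nlinarith
      · nlinarith [key, hσ.1, hσ.2]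

end SpiderAux2


open Finset

noncomputable section SpiderAux3

/-- sign alternation along a path -/
lemma altsign (g : ℕ → ℝ) : ∀ i : ℕ, 1 ≤ i → (∀ t, t < i → g t * g (t + 1) < 0) →
    0 < (-1 : ℝ) ^ i * (g 0 * g i) := by
  intro i
  induction i with
  | zero => intro h; omega
  | succ n ih =>
    intro _ halt
    rcases Nat.eq_or_lt_of_le (Nat.one_le_iff_ne_zero.mpr (Nat.succ_ne_zero n)) with h1 | h1
    · -- n = 0
      have hn : n = 0 := by omega
      subst hn
      have := halt 0 (by omega)
      simp only [zero_add, pow_one]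
      nlinarith
    · have hn : 1 ≤ n := by omega
      have hprev := ih hn (fun t ht => halt t (by omega))
      have hlast := halt n (by omega)
      have hmul : ((-1 : ℝ) ^ n * (g 0 * g n)) * (g n * g (n + 1)) < 0 :=
        mul_neg_of_pos_of_neg hprev hlast
      have hrw : ((-1 : ℝ) ^ n * (g 0 * g n)) * (g n * g (n + 1))
          = -((-1 : ℝ) ^ (n+1) * (g 0 * g (n + 1))) * (g n)^2 := by
        rw [pow_succ]; ring
      rw [hrw] at hmul
      nlinarith [sq_nonneg (g n)]

/-- the "deficiency" function -/
def fdef (a : ℕ) : ℕ := (a / 2).choose 2 + ((a + 1) / 2).choose 2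

lemma choose2_succ (n : ℕ) : (n + 1).choose 2 = n.choose 2 + n := by
  simp [Nat.choose_succ_succ, Nat.choose_one_right]; omega

lemma fdef_step (a : ℕ) : fdef (a + 2) = fdef a + a := by
  unfold fdef
  have h1 : (a + 2) / 2 = a / 2 + 1 := by omega
  have h2 : (a + 2 + 1) / 2 = (a + 1) / 2 + 1 := by omega
  rw [h1, h2, choose2_succ, choose2_succ]
  have : a / 2 + (a + 1) / 2 = a := by omega
  omega

lemma fdef_le_choose (a : ℕ) : fdef a ≤ a.choose 2 := by
  induction a using Nat.strong_induction_on with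
  | _ a ih =>
    match a with
    | 0 => simp [fdef]
    | 1 => simp [fdef]
    | (b + 2) =>
      have hb := ih b (by omega)
      rw [fdef_step]
      have : (b + 2).choose 2 = b.choose 2 + b + (b + 1) := by
        have e1 : (b + 2).choose 2 = (b + 1).choose 2 + (b + 1) := choose2_succ (b+1)
        have e2 : (b + 1).choose 2 = b.choose 2 + b := choose2_succ b
        omega
      omega

variable {α : Type*} [DecidableEq α]

/-- Non-edge 2-subsets of a triangle-free relation are at least `fdef |A|` -/
lemma mantel_compl (r : α → α → Prop) [DecidableRel r]
    (hsym : ∀ x y, r x y → r y x) :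
    ∀ (N : ℕ) (A : Finset α), A.card = N →
    (∀ x ∈ A, ∀ y ∈ A, ∀ z ∈ A, x ≠ y → x ≠ z → y ≠ z → ¬(r x y ∧ r x z ∧ r y z)) →
    fdef N ≤ ((A.powersetCard 2).filter
      (fun s => ∀ x ∈ s, ∀ y ∈ s, x ≠ y → ¬ r x y)).card := by
  intro N
  induction N using Nat.strong_induction_on with
  | _ N ih =>
    intro A hcard htri
    by_cases hex : ∃ x ∈ A, ∃ y ∈ A, x ≠ y ∧ r x y
    · obtain ⟨x, hx, y, hy, hxy, hrxy⟩ := hex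
      have hN2 : 2 ≤ N := by
        rw [← hcard]
        have : ({x, y} : Finset α) ⊆ A := by
          intro z hz; simp at hz; rcases hz with h | h <;> subst h <;> assumption
        calc 2 = ({x, y} : Finset α).card := by rw [card_insert_of_notMem (by simp [hxy]), card_singleton]
        _ ≤ A.card := card_le_card this
      set A' := (A.erase x).erase y with hA'
      have hyex : y ∈ A.erase x := mem_erase.mpr ⟨Ne.symm hxy, hy⟩
      have hcard' : A'.card = N - 2 := by
        rw [hA', card_erase_of_mem hyex, card_erase_of_mem hx, hcard]
        omega
      have hsubA : A' ⊆ A := (erase_subset _ _).trans (erase_subset _ _)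
      set NE := fun (B : Finset α) => ((B.powersetCard 2).filter
        (fun s => ∀ x ∈ s, ∀ y ∈ s, x ≠ y → ¬ r x y)) with hNE
      have ihA : fdef (N - 2) ≤ (NE A').card := ih (N - 2) (by omega) A' hcard'
        (fun a ha b hb c hc => htri a (hsubA ha) b (hsubA hb) c (hsubA hc))
      -- NE A' ⊆ NE A
      have hsub : NE A' ⊆ NE A := by
        intro s hs
        rw [hNE, mem_filter, mem_powersetCard] at hs ⊢
        exact ⟨⟨hs.1.1.trans hsubA, hs.1.2⟩, hs.2⟩
      -- the image of A' under φ
      set φ : α → Finset α := fun z => if r x z then {y, z} else {x, z} with hφ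
      have hφmem : ∀ z ∈ A', φ z ∈ NE A := by
        intro z hz
        have hzx : z ≠ x := by
          rw [hA'] at hz; exact ne_of_mem_erase (mem_of_mem_erase hz)
        have hzy : z ≠ y := by
          rw [hA'] at hz; exact ne_of_mem_erase hz
        have hzA : z ∈ A := hsubA hz
        rw [hNE, mem_filter, mem_powersetCard]
        by_cases hr : r x z
        · have hnyz : ¬ r y z := by
            intro hyz
            exact htri x hx y hy z hzA hxy hzx.symm hzy.symm ⟨hrxy, hr, hyz⟩
          rw [hφ]; simp only [if_pos hr]
          refine ⟨⟨?_, ?_⟩, ?_⟩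
          · intro w hw; simp at hw; rcases hw with h | h <;> subst h <;> assumption
          · rw [card_insert_of_notMem (by simp [hzy.symm]), card_singleton]
          · intro a ha b hb hab
            simp at ha hb
            rcases ha with ha | ha <;> rcases hb with hb | hb <;> subst ha <;> subst hb
            · exact absurd rfl hab
            · exact hnyz
            · intro hzyr; exact hnyz (hsym _ _ hzyr)
            · exact absurd rfl hab
        · rw [hφ]; simp only [if_neg hr]
          refine ⟨⟨?_, ?_⟩, ?_⟩
          · intro w hw; simp at hw; rcases hw with h | h <;> subst h <;> assumption
          · rw [card_insert_of_notMem (by simp [hzx.symm]), card_singleton]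
          · intro a ha b hb hab
            simp at ha hb
            rcases ha with ha | ha <;> rcases hb with hb | hb <;> subst ha <;> subst hb
            · exact absurd rfl hab
            · exact hr
            · intro hzxr; exact hr (hsym _ _ hzxr)
            · exact absurd rfl hab
      have hφinj : Set.InjOn φ A' := by
        intro z hz z' hz' heq
        have hzx : z ≠ x := ne_of_mem_erase (mem_of_mem_erase hz)
        have hzy : z ≠ y := ne_of_mem_erase hz
        have hz'x : z' ≠ x := ne_of_mem_erase (mem_of_mem_erase hz')
        have hz'y : z' ≠ y := ne_of_mem_erase hz'
        rw [hφ] at heq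
        simp only at heq
        by_cases h1 : r x z <;> by_cases h2 : r x z' <;>
          simp only [if_pos, if_neg, h1, h2, if_true, if_false] at heq
        · -- {y,z} = {y,z'}
          have : z ∈ ({y, z'} : Finset α) := by rw [← heq]; simp
          simp at this; tauto
        · -- {y,z} = {x,z'}
          have : x ∈ ({y, z} : Finset α) := by rw [heq]; simp
          simp at this
          rcases this with h | h
          · exact absurd h hxy
          · exact absurd h.symm hzx
        · have : x ∈ ({y, z'} : Finset α) := by rw [← heq]; simp
          simp at this
          rcases this with h | h
          · exact absurd h hxy
          · exact absurd h.symm hz'x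
        · have : z ∈ ({x, z'} : Finset α) := by rw [← heq]; simp
          simp at this; tauto
      have himg : A'.image φ ⊆ NE A := by
        intro s hs
        rw [mem_image] at hs
        obtain ⟨z, hz, hzeq⟩ := hs
        exact hzeq ▸ hφmem z hz
      have hdisj : Disjoint (A'.image φ) (NE A') := by
        rw [disjoint_left]
        intro s hs hs'
        rw [mem_image] at hs
        obtain ⟨z, hz, hzeq⟩ := hs
        rw [hNE, mem_filter, mem_powersetCard] at hs'
        have hsubs := hs'.1.1
        rw [← hzeq, hφ] at hsubs
        by_cases h1 : r x z <;> simp only [if_pos, if_neg, h1, if_true, if_false] at hsubs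
        · have : y ∈ A' := hsubs (by simp)
          exact ne_of_mem_erase this rfl
        · have : x ∈ A' := hsubs (by simp)
          exact ne_of_mem_erase (mem_of_mem_erase this) rfl
      have hunion : (A'.image φ) ∪ NE A' ⊆ NE A := union_subset himg hsub
      have hcards : (A'.image φ).card + (NE A').card ≤ (NE A).card := by
        rw [← card_union_of_disjoint hdisj]
        exact card_le_card hunion
      have himgcard : (A'.image φ).card = N - 2 := by
        rw [Finset.card_image_of_injOn hφinj, hcard']
      have hstep : fdef N ≤ fdef (N - 2) + (N - 2) := by
        have h2 : fdef (N - 2 + 2) = fdef (N - 2) + (N - 2) := fdef_step (N - 2)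
        have h3 : N - 2 + 2 = N := by omega
        rw [h3] at h2
        omega
      show fdef N ≤ (NE A).card
      omega
    · -- no edge at all : all 2-subsets are non-edges
      push_neg at hex
      have : ((A.powersetCard 2).filter
          (fun s => ∀ x ∈ s, ∀ y ∈ s, x ≠ y → ¬ r x y)) = A.powersetCard 2 := by
        apply filter_true_of_mem
        intro s hs
        rw [mem_powersetCard] at hs
        intro a ha b hb hab
        exact hex a (hs.1 ha) b (hs.1 hb) hab
      rw [this, card_powersetCard, hcard]
      exact fdef_le_choose N
end SpiderAux3


open Finset SimpleGraph

section SpiderWalk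

variable {V : Type*} (G : SimpleGraph V)

lemma dist_getVert_le (hconn : G.Connected) {v u : V} (p : G.Walk v u) :
    ∀ t : ℕ, G.dist v (p.getVert t) ≤ t := by
  intro t
  induction t with
  | zero => rw [p.getVert_zero, G.dist_self]
  | succ t iht =>
    by_cases hlt : t < p.length
    · have hadj := p.adj_getVert_succ hlt
      have h1 : G.dist (p.getVert t) (p.getVert (t+1)) ≤ 1 := by
        rw [SimpleGraph.dist_eq_one_iff_adj.mpr hadj]
      calc G.dist v (p.getVert (t+1)) ≤
          G.dist v (p.getVert t) + G.dist (p.getVert t) (p.getVert (t+1)) :=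
            hconn.dist_triangle
        _ ≤ t + 1 := by omega
    · push_neg at hlt
      have h1 : p.getVert (t+1) = p.getVert t := by
        rw [p.getVert_of_length_le hlt, p.getVert_of_length_le (by omega)]
      rw [h1]; omega

lemma dist_getVert_suffix (hconn : G.Connected) {v u : V} (p : G.Walk v u) :
    ∀ k t : ℕ, t + k = p.length → G.dist (p.getVert t) u ≤ k := by
  intro k
  induction k with
  | zero =>
    intro t ht
    have : p.getVert t = u := p.getVert_of_length_le (by omega)
    rw [this, G.dist_self]
  | succ k ihk =>
    intro t ht
    have hadj := p.adj_getVert_succ (by omega : t < p.length)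
    have h1 : G.dist (p.getVert t) (p.getVert (t+1)) ≤ 1 := by
      rw [SimpleGraph.dist_eq_one_iff_adj.mpr hadj]
    calc G.dist (p.getVert t) u ≤
        G.dist (p.getVert t) (p.getVert (t+1)) + G.dist (p.getVert (t+1)) u :=
          hconn.dist_triangle
      _ ≤ 1 + k := by
          have := ihk (t+1) (by omega)
          omega
      _ = k + 1 := by omega

lemma dist_getVert_eq (hconn : G.Connected) {v u : V} (p : G.Walk v u)
    (hlen : p.length = G.dist v u) {t : ℕ} (ht : t ≤ G.dist v u) :
    G.dist v (p.getVert t) = t := by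
  have h1 := dist_getVert_le G hconn p t
  have h2 := dist_getVert_suffix G hconn p (G.dist v u - t) t (by omega)
  have h3 : G.dist v u ≤ G.dist v (p.getVert t) + G.dist (p.getVert t) u :=
    hconn.dist_triangle
  omega

end SpiderWalk

section SpiderLegs

variable {n : ℕ} {S : SimpleGraph (Fin n)} {v : Fin n}
  {x : Fin n → ℕ → Fin n}

/-- abstract leg facts -/
structure LegSystem (S : SimpleGraph (Fin n)) (v : Fin n) (x : Fin n → ℕ → Fin n) : Prop where
  x0 : ∀ u, x u 0 = v
  xl : ∀ u, x u (S.dist v u) = u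
  adj : ∀ u t, t < S.dist v u → S.Adj (x u t) (x u (t + 1))
  dx : ∀ u t, t ≤ S.dist v u → S.dist v (x u t) = t

variable [DecidableRel S.Adj]

/-- distinct legs are vertex-disjoint above the root. -/
lemma legs_disjoint (L : LegSystem S v x)
    (huniq : ∀ u, 3 ≤ S.degree u → u = v) {i : ℕ}
    {u u' : Fin n} (hu : S.dist v u = i) (hu' : S.dist v u' = i) (hne : u ≠ u') :
    ∀ k t, 1 ≤ t → t + k = i → x u t ≠ x u' t := by
  intro k
  induction k with
  | zero =>
    intro t h1 ht
    have : t = i := by omega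
    subst this
    rw [← hu] at *
    rw [L.xl u]
    rw [hu, ← hu'] at *
    rw [L.xl u']
    exact hne
  | succ k ihk =>
    intro t h1 ht heq
    have hbc : x u (t+1) ≠ x u' (t+1) := ihk (t+1) (by omega) (by omega)
    set w := x u t with hw
    -- three distinct neighbors of w
    have ha : S.Adj w (x u (t-1)) := by
      have := L.adj u (t-1) (by omega)
      have h2 : t - 1 + 1 = t := by omega
      rw [h2] at this
      exact this.symm
    have hb : S.Adj w (x u (t+1)) := L.adj u t (by omega)
    have hc : S.Adj w (x u' (t+1)) := by
      rw [heq]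
      exact L.adj u' t (by omega)
    have hdb : S.dist v (x u (t+1)) = t + 1 := L.dx u (t+1) (by omega)
    have hdc : S.dist v (x u' (t+1)) = t + 1 := L.dx u' (t+1) (by omega)
    have hda : S.dist v (x u (t-1)) = t - 1 := L.dx u (t-1) (by omega)
    have hab : x u (t-1) ≠ x u (t+1) := by
      intro h; rw [h] at hda; omega
    have hac : x u (t-1) ≠ x u' (t+1) := by
      intro h; rw [h] at hda; omega
    have hsub : {x u (t-1), x u (t+1), x u' (t+1)} ⊆ S.neighborFinset w := by
      intro z hz
      simp only [Finset.mem_insert, Finset.mem_singleton] at hz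
      rw [SimpleGraph.mem_neighborFinset]
      rcases hz with h | h | h <;> subst h
      · exact ha
      · exact hb
      · exact hc
    have hcard : ({x u (t-1), x u (t+1), x u' (t+1)} : Finset (Fin n)).card = 3 := by
      rw [Finset.card_insert_of_notMem (by simp [hab, hac]),
        Finset.card_insert_of_notMem (by simp [hbc]), Finset.card_singleton]
    have hdeg : 3 ≤ S.degree w := by
      rw [← SimpleGraph.card_neighborFinset_eq_degree, ← hcard]
      exact Finset.card_le_card hsub
    have hwv : w = v := huniq w hdeg
    have : S.dist v w = t := L.dx u t (by omega)
    rw [hwv, S.dist_self] at this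
    omega

lemma legs_disjoint' (L : LegSystem S v x)
    (huniq : ∀ u, 3 ≤ S.degree u → u = v) {i : ℕ}
    {u u' : Fin n} (hu : S.dist v u = i) (hu' : S.dist v u' = i) (hne : u ≠ u')
    {t s : ℕ} (ht1 : 1 ≤ t) (hti : t ≤ i) (hsi : s ≤ i) : x u t ≠ x u' s := by
  intro heq
  have h1 : S.dist v (x u t) = t := L.dx u t (by omega)
  have h2 : S.dist v (x u' s) = s := L.dx u' s (by omega)
  rw [heq] at h1
  have hts : t = s := by omega
  subst hts
  exact legs_disjoint L huniq hu hu' hne (i - t) t ht1 (by omega) heq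

end SpiderLegs

section SpiderEdges

variable {n : ℕ} {S : SimpleGraph (Fin n)} {v : Fin n} {x : Fin n → ℕ → Fin n}

/-- the level-`t` edge of the leg of `u` -/
def Et (x : Fin n → ℕ → Fin n) (u : Fin n) (t : ℕ) : Sym2 (Fin n) :=
  s(x u (t-1), x u t)

/-- level of an edge -/
noncomputable def lvlE (S : SimpleGraph (Fin n)) (v : Fin n) (e : Sym2 (Fin n)) : ℕ :=
  Sym2.lift ⟨fun a b => max (S.dist v a) (S.dist v b), fun a b => max_comm _ _⟩ e

variable [DecidableRel S.Adj]

lemma Et_mem (L : LegSystem S v x) {u : Fin n} {t : ℕ}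
    (h1 : 1 ≤ t) (ht : t ≤ S.dist v u) : Et x u t ∈ S.edgeSet := by
  rw [Et, SimpleGraph.mem_edgeSet]
  have := L.adj u (t-1) (by omega)
  have h2 : t - 1 + 1 = t := by omega
  rw [h2] at this
  exact this

lemma lvl_Et (L : LegSystem S v x) {u : Fin n} {t : ℕ}
    (h1 : 1 ≤ t) (ht : t ≤ S.dist v u) : lvlE S v (Et x u t) = t := by
  show max (S.dist v (x u (t-1))) (S.dist v (x u t)) = t
  rw [L.dx u (t-1) (by omega), L.dx u t ht]
  omega

lemma EtEq (L : LegSystem S v x) (huniq : ∀ u, 3 ≤ S.degree u → u = v) {i : ℕ}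
    {u q : Fin n} (hu : S.dist v u = i) (hq : S.dist v q = i)
    {t s : ℕ} (ht1 : 1 ≤ t) (hti : t ≤ i) (hs1 : 1 ≤ s) (hsi : s ≤ i)
    (heq : Et x u t = Et x q s) : t = s ∧ u = q := by
  rw [Et, Et, Sym2.eq_iff] at heq
  have d1 : S.dist v (x u (t-1)) = t - 1 := L.dx u (t-1) (by omega)
  have d2 : S.dist v (x u t) = t := L.dx u t (by omega)
  have d3 : S.dist v (x q (s-1)) = s - 1 := L.dx q (s-1) (by omega)
  have d4 : S.dist v (x q s) = s := L.dx q s (by omega)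
  rcases heq with ⟨h1, h2⟩ | ⟨h1, h2⟩
  · have hts : t = s := by
      rw [h2] at d2; omega
    subst hts
    refine ⟨rfl, ?_⟩
    by_contra hne
    exact legs_disjoint' L huniq hu hq hne ht1 hti (le_of_eq (by omega) |>.trans hti) h2
  · exfalso
    rw [h1] at d1
    rw [h2] at d2
    omega

lemma Et_indep (L : LegSystem S v x) (huniq : ∀ u, 3 ≤ S.degree u → u = v) {i : ℕ}
    {u u' : Fin n} (hu : S.dist v u = i) (hu' : S.dist v u' = i) (hne : u ≠ u')
    (hi : 2 ≤ i) {t : ℕ} (ht1 : 1 ≤ t) (hti : t ≤ i) :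
    ∀ z, z ∈ Et x u i → z ∉ Et x u' t := by
  have k1 : x u (i-1) ≠ x u' (t-1) := by
    rcases Nat.eq_or_lt_of_le ht1 with h | h
    · -- t = 1, x u' 0 = v
      have : x u' (t-1) = v := by
        have : t - 1 = 0 := by omega
        rw [this, L.x0]
      rw [this]
      intro hh
      have := L.dx u (i-1) (by omega)
      rw [hh, S.dist_self] at this
      omega
    · exact legs_disjoint' L huniq hu hu' hne (by omega) (by omega) (by omega)
  have k2 : x u (i-1) ≠ x u' t := legs_disjoint' L huniq hu hu' hne (by omega) (by omega) hti
  have k3 : x u i ≠ x u' (t-1) := legs_disjoint' L huniq hu hu' hne (by omega) le_rfl (by omega)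
  have k4 : x u i ≠ x u' t := legs_disjoint' L huniq hu hu' hne (by omega) le_rfl hti
  intro z hz1 hz2
  rw [Et, Sym2.mem_iff] at hz1 hz2
  rcases hz1 with h | h <;> rcases hz2 with h' | h' <;> subst h <;>
    first
    | exact k1 h' | exact k2 h' | exact k3 h' | exact k4 h'

end SpiderEdges

section SpiderTri

variable {n : ℕ} {S : SimpleGraph (Fin n)} {v : Fin n} {x : Fin n → ℕ → Fin n}
variable [DecidableRel S.Adj]

lemma edgeSeg_mk (f : Fin n → ℝ × ℝ) (a b : Fin n) :
    edgeSeg f s(a, b) = openSegment ℝ (f a) (f b) := rfl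

lemma properSign {f : Fin n → ℝ × ℝ} (hinj : Function.Injective f)
    (hnt : ∀ u w z : Fin n, S.Adj u w → z ≠ u → z ≠ w → f z ∉ openSegment ℝ (f u) (f w))
    {a b c d : Fin n} (hab : S.Adj a b) (hcd : S.Adj c d)
    (hdisj : ∀ z, z ∈ s(a, b) → z ∉ s(c, d))
    (hx : (edgeSeg f s(a, b) ∩ edgeSeg f s(c, d)).Nonempty) :
    crp (f a) (f b) (f c) * crp (f a) (f b) (f d) < 0 := by
  have hca : c ≠ a := by
    intro h; subst h; exact hdisj c (by simp) (by simp)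
  have hcb : c ≠ b := by
    intro h; subst h; exact hdisj c (by simp) (by simp)
  have hda : d ≠ a := by
    intro h; subst h; exact hdisj d (by simp) (by simp)
  have hdb : d ≠ b := by
    intro h; subst h; exact hdisj d (by simp) (by simp)
  rw [edgeSeg_mk, edgeSeg_mk] at hx
  exact proper_cross (fun h => hab.ne (hinj h)) (fun h => hcd.ne (hinj h))
    (fun h => hca (hinj h)) (fun h => hcb (hinj h))
    (fun h => hda (hinj h)) (fun h => hdb (hinj h))
    (hnt a b c hab hca hcb) (hnt a b d hab hda hdb)
    (hnt c d a hcd (Ne.symm hca) (Ne.symm hda)) (hnt c d b hcd (Ne.symm hcb) (Ne.symm hdb))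
    hx

lemma no_triangle (L : LegSystem S v x) (huniq : ∀ u, 3 ≤ S.degree u → u = v)
    {f : Fin n → ℝ × ℝ} (hinj : Function.Injective f)
    (hnt : ∀ u w z : Fin n, S.Adj u w → z ≠ u → z ≠ w → f z ∉ openSegment ℝ (f u) (f w))
    {i : ℕ} (hi : 2 ≤ i) {u1 u2 u3 : Fin n}
    (h1 : S.dist v u1 = i) (h2 : S.dist v u2 = i) (h3 : S.dist v u3 = i)
    (h12 : u1 ≠ u2) (h13 : u1 ≠ u3) (h23 : u2 ≠ u3)
    (hc : ∀ uj uk, uj ∈ ({u1, u2, u3} : Set (Fin n)) → uk ∈ ({u1, u2, u3} : Set (Fin n)) →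
      uj ≠ uk →
      ∀ t, 1 ≤ t → t ≤ i → (edgeSeg f (Et x uj i) ∩ edgeSeg f (Et x uk t)).Nonempty) :
    False := by
  set g : Fin n → ℝ × ℝ → ℝ := fun u p => crp (f (x u (i-1))) (f (x u i)) p with hg
  set ss : Fin n → ℝ := fun u => (-1 : ℝ)^i * g u (f v) with hss
  have hpair : ∀ uj uk, uj ∈ ({u1, u2, u3} : Set (Fin n)) → uk ∈ ({u1, u2, u3} : Set (Fin n)) →
      S.dist v uj = i → S.dist v uk = i → uj ≠ uk →
      (0 < ss uj * g uj (f (x uk i)) ∧ ss uj * g uj (f (x uk (i-1))) < 0) := by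
    intro uj uk hmj hmk huj huk hne
    have hprop : ∀ t, 1 ≤ t → t ≤ i →
        g uj (f (x uk (t-1))) * g uj (f (x uk t)) < 0 := by
      intro t ht1 hti
      have hadj1 : S.Adj (x uj (i-1)) (x uj i) := by
        have := L.adj uj (i-1) (by omega)
        have he : i - 1 + 1 = i := by omega
        rwa [he] at this
      have hadj2 : S.Adj (x uk (t-1)) (x uk t) := by
        have := L.adj uk (t-1) (by omega)
        have he : t - 1 + 1 = t := by omega
        rwa [he] at this
      have hdisj := Et_indep L huniq huj huk hne hi ht1 hti
      have hx := hc uj uk hmj hmk hne t ht1 hti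
      rw [hg]
      exact properSign hinj hnt hadj1 hadj2 (by rw [Et, Et] at hdisj; exact hdisj) hx
    -- alternation
    have halt := altsign (fun t => g uj (f (x uk t))) i (by omega) ?_
    · have hg0 : g uj (f (x uk 0)) = g uj (f v) := by rw [L.x0]
      rw [hg0] at halt
      constructor
      · have hrw : ss uj * g uj (f (x uk i)) =
            (-1:ℝ)^i * (g uj (f v) * g uj (f (x uk i))) := by
          rw [hss]; ring
        rw [hrw]
        exact halt
      · have hlast := hprop i (by omega) le_rfl
        have hz : 0 < ss uj * g uj (f (x uk i)) := by
          have hrw : ss uj * g uj (f (x uk i)) =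
              (-1:ℝ)^i * (g uj (f v) * g uj (f (x uk i))) := by
            rw [hss]; ring
          rw [hrw]; exact halt
        nlinarith [hz, hlast, sq_nonneg (ss uj), sq_nonneg (g uj (f (x uk i)))]
    · intro t htlt
      have := hprop (t+1) (by omega) (by omega)
      simpa using this
  have m1 : u1 ∈ ({u1, u2, u3} : Set (Fin n)) := by simp
  have m2 : u2 ∈ ({u1, u2, u3} : Set (Fin n)) := by simp
  have m3 : u3 ∈ ({u1, u2, u3} : Set (Fin n)) := by simp
  have p12 := hpair u1 u2 m1 m2 h1 h2 h12
  have p13 := hpair u1 u3 m1 m3 h1 h3 h13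
  have p21 := hpair u2 u1 m2 m1 h2 h1 (Ne.symm h12)
  have p23 := hpair u2 u3 m2 m3 h2 h3 h23
  have p31 := hpair u3 u1 m3 m1 h3 h1 (Ne.symm h13)
  have p32 := hpair u3 u2 m3 m2 h3 h2 (Ne.symm h23)
  exact lemBs (f (x u1 (i-1))) (f (x u1 i)) (f (x u2 (i-1))) (f (x u2 i))
    (f (x u3 (i-1))) (f (x u3 i)) (ss u1) (ss u2) (ss u3)
    p12.2 p12.1 p13.2 p13.1 p21.2 p21.1 p23.2 p23.1 p31.2 p31.1 p32.2 p32.1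

end SpiderTri

section SpiderMain

open SimpleGraph

def WitP {n : ℕ} (S : SimpleGraph (Fin n)) (v : Fin n) (x : Fin n → ℕ → Fin n)
    (f : Fin n → ℝ × ℝ) (i : ℕ) (s : Finset (Fin n)) (p : Finset (Sym2 (Fin n))) : Prop :=
  ∃ u u' t, S.dist v u = i ∧ S.dist v u' = i ∧ u ≠ u' ∧ 1 ≤ t ∧ t ≤ i ∧
    s = {u, u'} ∧ p = {Et x u i, Et x u' t} ∧
    ¬ (edgeSeg f (Et x u i) ∩ edgeSeg f (Et x u' t)).Nonempty

lemma pair_eq_cases {α : Type*} [DecidableEq α] {a b c d : α} (hne : a ≠ b)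
    (h : ({a, b} : Finset α) = {c, d}) : (a = c ∧ b = d) ∨ (a = d ∧ b = c) := by
  have ha : a ∈ ({c, d} : Finset α) := by rw [← h]; simp
  have hb : b ∈ ({c, d} : Finset α) := by rw [← h]; simp
  simp only [Finset.mem_insert, Finset.mem_singleton] at ha hb
  rcases ha with h1 | h1 <;> rcases hb with h2 | h2
  · exact absurd (h1.trans h2.symm) hne
  · exact Or.inl ⟨h1, h2⟩
  · exact Or.inr ⟨h1, h2⟩
  · exact absurd (h1.trans h2.symm) hne

theorem spider_crossing_upper_bound (n h : ℕ) (S : SimpleGraph (Fin n))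
    [DecidableRel S.Adj] (hS : S.IsTree) (v : Fin n)
    (hdeg : 3 ≤ S.degree v) (huniq : ∀ u, 3 ≤ S.degree u → u = v)
    (a : ℕ → ℕ) (ha : ∀ i, 1 ≤ i → a i = Set.ncard {u : Fin n | S.dist v u = i})
    (hecc : ∀ u, S.dist v u ≤ h) (hecc' : ∃ u, S.dist v u = h)
    (f : Fin n → ℝ × ℝ) (hf : IsLegalDrawing S f) :
    (crossCount S f : ℤ) ≤
      (Nat.choose (n - 1) 2 : ℤ) - ∑ u : Fin n, (Nat.choose (S.degree u) 2 : ℤ) -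
        ∑ i ∈ Finset.Icc 2 h,
          ((Nat.choose (a i / 2) 2 : ℤ) + (Nat.choose ((a i + 1) / 2) 2 : ℤ)) := by
  classical
  obtain ⟨hinj, hnt, -⟩ := hf
  have hconn : S.Connected := hS.isConnected
  choose W hW using (fun u => hconn.exists_walk_length_eq_dist v u)
  set x : Fin n → ℕ → Fin n := fun u t => (W u).getVert t with hxdef
  have L : LegSystem S v x := by
    refine ⟨fun u => ?_, fun u => ?_, fun u t ht => ?_, fun u t ht => ?_⟩
    · exact SimpleGraph.Walk.getVert_zero _
    · show (W u).getVert (S.dist v u) = u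
      rw [← hW u]; exact SimpleGraph.Walk.getVert_length _
    · show S.Adj ((W u).getVert t) ((W u).getVert (t + 1))
      exact (W u).adj_getVert_succ (by rw [hW u]; exact ht)
    · exact dist_getVert_eq S hconn (W u) (hW u) ht
  have hn1 : S.edgeFinset.card = n - 1 := by
    have hh := hS.card_edgeFinset
    rw [Fintype.card_fin] at hh
    omega
  set crx : Sym2 (Fin n) → Sym2 (Fin n) → Prop :=
    fun e1 e2 => (edgeSeg f e1 ∩ edgeSeg f e2).Nonempty with hcrx
  have hcrxsymm : ∀ e1 e2, crx e1 e2 → crx e2 e1 := by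
    intro e1 e2 hcr
    show (edgeSeg f e2 ∩ edgeSeg f e1).Nonempty
    rw [Set.inter_comm]
    exact hcr
  set Pairs : Finset (Finset (Sym2 (Fin n))) := S.edgeFinset.powersetCard 2 with hPairsDef
  set XF : Finset (Finset (Sym2 (Fin n))) := Pairs.filter (fun s => ∃ e1 e2 : Sym2 (Fin n),
      e1 ∈ S.edgeSet ∧ e2 ∈ S.edgeSet ∧ (∀ z, z ∈ e1 → z ∉ e2) ∧
      crx e1 e2 ∧ s = {e1, e2}) with hXFdef
  -- crossCount = XF.card
  have hcc : crossCount S f = XF.card := by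
    rw [crossCount]
    have hseteq : {s : Set (Sym2 (Fin n)) | ∃ e₁ e₂ : Sym2 (Fin n),
        e₁ ∈ S.edgeSet ∧ e₂ ∈ S.edgeSet ∧ (∀ z, z ∈ e₁ → z ∉ e₂) ∧
        (edgeSeg f e₁ ∩ edgeSeg f e₂).Nonempty ∧ s = {e₁, e₂}}
        = (fun (t : Finset (Sym2 (Fin n))) => (↑t : Set (Sym2 (Fin n)))) '' ↑XF := by
      ext s
      simp only [Set.mem_setOf_eq, Set.mem_image, Finset.mem_coe]
      constructor
      · rintro ⟨e1, e2, he1, he2, hdisj, hcr, rfl⟩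
        have hne : e1 ≠ e2 := by
          intro hh
          exact hdisj e1.out.1 (Sym2.out_fst_mem e1) (hh ▸ Sym2.out_fst_mem e1)
        refine ⟨{e1, e2}, ?_, by simp⟩
        rw [hXFdef, Finset.mem_filter]
        constructor
        · rw [hPairsDef, Finset.mem_powersetCard]
          constructor
          · intro z hz
            simp only [Finset.mem_insert, Finset.mem_singleton] at hz
            rcases hz with rfl | rfl
            · exact SimpleGraph.mem_edgeFinset.mpr he1
            · exact SimpleGraph.mem_edgeFinset.mpr he2
          · rw [Finset.card_insert_of_notMem (by simp [hne]), Finset.card_singleton]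
        · exact ⟨e1, e2, he1, he2, hdisj, hcr, rfl⟩
      · rintro ⟨t, htXF, rfl⟩
        rw [hXFdef, Finset.mem_filter] at htXF
        obtain ⟨-, e1, e2, he1, he2, hdisj, hcr, rfl⟩ := htXF
        exact ⟨e1, e2, he1, he2, hdisj, hcr, by simp⟩
    rw [hseteq, Set.ncard_image_of_injective _ Finset.coe_injective, Set.ncard_coe_finset]
  -- the shared-vertex pairs
  set Au : Fin n → Finset (Finset (Sym2 (Fin n))) :=
    fun u => (S.incidenceFinset u).powersetCard 2 with hAudef
  set AllA : Finset (Finset (Sym2 (Fin n))) := Finset.univ.biUnion Au with hAllAdef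
  have hAuP : ∀ u, Au u ⊆ Pairs := by
    intro u
    rw [hAudef, hPairsDef]
    apply Finset.powersetCard_mono
    intro e he
    rw [SimpleGraph.mem_incidenceFinset] at he
    exact SimpleGraph.mem_edgeFinset.mpr he.1
  have hAuMem : ∀ u s, s ∈ Au u → ∀ e ∈ s, e ∈ S.edgeSet ∧ u ∈ e := by
    intro u s hs e he
    rw [hAudef, Finset.mem_powersetCard] at hs
    have := hs.1 he
    rw [SimpleGraph.mem_incidenceFinset] at this
    exact ⟨this.1, this.2⟩
  have hAucard2 : ∀ u s, s ∈ Au u → s.card = 2 := by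
    intro u s hs
    rw [hAudef, Finset.mem_powersetCard] at hs
    exact hs.2
  have hAudisj : ∀ u ∈ (Finset.univ : Finset (Fin n)), ∀ u' ∈ Finset.univ, u ≠ u' →
      Disjoint (Au u) (Au u') := by
    intro u _ u' _ hne
    rw [Finset.disjoint_left]
    intro s hs hs'
    obtain ⟨e1, e2, he12, hseq⟩ := Finset.card_eq_two.mp (hAucard2 u s hs)
    have h1 : u ∈ e1 := (hAuMem u s hs e1 (by rw [hseq]; simp)).2
    have h1' : u' ∈ e1 := (hAuMem u' s hs' e1 (by rw [hseq]; simp)).2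
    have h2 : u ∈ e2 := (hAuMem u s hs e2 (by rw [hseq]; simp)).2
    have h2' : u' ∈ e2 := (hAuMem u' s hs' e2 (by rw [hseq]; simp)).2
    have he1 : e1 = s(u, u') := (Sym2.mem_and_mem_iff hne).mp ⟨h1, h1'⟩
    have he2 : e2 = s(u, u') := (Sym2.mem_and_mem_iff hne).mp ⟨h2, h2'⟩
    exact he12 (he1.trans he2.symm)
  have hAllAcard : AllA.card = ∑ u : Fin n, (S.degree u).choose 2 := by
    rw [hAllAdef, Finset.card_biUnion hAudisj]
    apply Finset.sum_congr rfl
    intro u _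
    rw [hAudef]
    rw [Finset.card_powersetCard, SimpleGraph.card_incidenceFinset_eq_degree]
  -- the level sets and relation
  set Zi : ℕ → Finset (Fin n) := fun i => Finset.univ.filter (fun u => S.dist v u = i)
    with hZidef
  set radj : ℕ → Fin n → Fin n → Prop := fun i u u' => ∀ t, 1 ≤ t → t ≤ i →
      (crx (Et x u i) (Et x u' t) ∧ crx (Et x u t) (Et x u' i)) with hradjdef
  have hradjsymm : ∀ i u u', radj i u u' → radj i u' u := by
    intro i u u' hr t h1 h2
    obtain ⟨hA, hB⟩ := hr t h1 h2
    exact ⟨hcrxsymm _ _ hB, hcrxsymm _ _ hA⟩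
  set NAi : ℕ → Finset (Finset (Fin n)) := fun i => ((Zi i).powersetCard 2).filter
      (fun s => ∀ p ∈ s, ∀ q ∈ s, p ≠ q → ¬ radj i p q) with hNAidef
  have hZimem : ∀ i u, u ∈ Zi i ↔ S.dist v u = i := by
    intro i u; rw [hZidef]; simp
  -- triangle freeness
  have htrifree : ∀ i, 2 ≤ i → ∀ p ∈ Zi i, ∀ q ∈ Zi i, ∀ w ∈ Zi i,
      p ≠ q → p ≠ w → q ≠ w → ¬(radj i p q ∧ radj i p w ∧ radj i q w) := by
    intro i hi p hp q hq w hw hpq hpw hqw ⟨rpq, rpw, rqw⟩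
    have hdp : S.dist v p = i := (hZimem i p).mp hp
    have hdq : S.dist v q = i := (hZimem i q).mp hq
    have hdw : S.dist v w = i := (hZimem i w).mp hw
    apply no_triangle L huniq hinj hnt hi hdp hdq hdw hpq hpw hqw
    intro uj uk hmj hmk hne t ht1 hti
    simp only [Set.mem_insert_iff, Set.mem_singleton_iff] at hmj hmk
    have hget : ∀ y y', radj i y y' → (edgeSeg f (Et x y i) ∩ edgeSeg f (Et x y' t)).Nonempty := by
      intro y y' hr
      exact (hr t ht1 hti).1
    rcases hmj with rfl | rfl | rfl <;> rcases hmk with rfl | rfl | rfl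
    · exact absurd rfl hne
    · exact hget _ _ rpq
    · exact hget _ _ rpw
    · exact hget _ _ (hradjsymm i _ _ rpq)
    · exact absurd rfl hne
    · exact hget _ _ rqw
    · exact hget _ _ (hradjsymm i _ _ rpw)
    · exact hget _ _ (hradjsymm i _ _ rqw)
    · exact absurd rfl hne
  -- mantel bound on non-adjacent pairs
  have hZicard : ∀ i, 1 ≤ i → a i = (Zi i).card := by
    intro i hi
    rw [ha i hi]
    have hseteq : {u : Fin n | S.dist v u = i} = ↑(Zi i) := by
      ext u; rw [Finset.mem_coe, hZimem]; rfl
    rw [hseteq, Set.ncard_coe_finset]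
  have hNAicard : ∀ i, 2 ≤ i → fdef (a i) ≤ (NAi i).card := by
    intro i hi
    rw [hZicard i (by omega)]
    have hm := mantel_compl (radj i) (hradjsymm i) ((Zi i).card) (Zi i) rfl (htrifree i hi)
    rw [hNAidef]
    simp only
    rw [Finset.filter_congr_decidable]
    rw [Finset.filter_congr_decidable] at hm
    exact hm
  -- witnesses
  have hwitex : ∀ i, 2 ≤ i → ∀ s ∈ NAi i, ∃ p, WitP S v x f i s p := by
    intro i hi s hs
    rw [hNAidef, Finset.mem_filter, Finset.mem_powersetCard] at hs
    obtain ⟨⟨hsub, hcard⟩, hpred⟩ := hs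
    obtain ⟨u, u', hne, rfl⟩ := Finset.card_eq_two.mp hcard
    have hu : S.dist v u = i := (hZimem i u).mp (hsub (by simp))
    have hu' : S.dist v u' = i := (hZimem i u').mp (hsub (by simp))
    have hnr : ¬ ∀ t, 1 ≤ t → t ≤ i →
        (crx (Et x u i) (Et x u' t) ∧ crx (Et x u t) (Et x u' i)) :=
      hpred u (by simp) u' (by simp) hne
    obtain ⟨t, hnt'⟩ := Classical.not_forall.mp hnr
    obtain ⟨ht1, hnt2⟩ := Classical.not_imp.mp hnt'
    obtain ⟨hti, hnot⟩ := Classical.not_imp.mp hnt2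
    by_cases hA : crx (Et x u i) (Et x u' t)
    · have hB : ¬ crx (Et x u t) (Et x u' i) := fun hB => hnot ⟨hA, hB⟩
      refine ⟨{Et x u' i, Et x u t}, u', u, t, hu', hu, hne.symm, ht1, hti,
        Finset.pair_comm u u', rfl, ?_⟩
      intro hcr
      exact hB (hcrxsymm _ _ hcr)
    · exact ⟨{Et x u i, Et x u' t}, u, u', t, hu, hu', hne, ht1, hti, rfl, rfl, hA⟩
  set wfun : ℕ → Finset (Fin n) → Finset (Sym2 (Fin n)) := fun i s =>
    if hh : 2 ≤ i ∧ s ∈ NAi i then (hwitex i hh.1 s hh.2).choose else ∅ with hwfundef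
  have hwfun : ∀ i, 2 ≤ i → ∀ s ∈ NAi i, WitP S v x f i s (wfun i s) := by
    intro i hi s hs
    rw [hwfundef]
    simp only
    rw [dif_pos ⟨hi, hs⟩]
    exact (hwitex i hi s hs).choose_spec
  -- facts about witnesses
  have hWfacts : ∀ i s p, 2 ≤ i → WitP S v x f i s p →
      ∃ e1 e2, p = {e1, e2} ∧ e1 ∈ S.edgeSet ∧ e2 ∈ S.edgeSet ∧
        (∀ z, z ∈ e1 → z ∉ e2) ∧ ¬ crx e1 e2 ∧ e1 ≠ e2 := by
    intro i s p hi hWit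
    obtain ⟨u, u', t, hu, hu', hne, ht1, hti, -, rfl, hnc⟩ := hWit
    have hindep := Et_indep L huniq hu hu' hne hi ht1 hti
    have hmem1 : Et x u i ∈ S.edgeSet := Et_mem L (by omega) (by omega : i ≤ S.dist v u)
    have hmem2 : Et x u' t ∈ S.edgeSet := Et_mem L ht1 (by omega : t ≤ S.dist v u')
    refine ⟨Et x u i, Et x u' t, rfl, hmem1, hmem2, hindep, hnc, ?_⟩
    intro hh
    exact hindep (x u i) (by rw [Et]; simp) (by rw [← hh, Et]; simp)
  have hWlvl : ∀ i s p, 2 ≤ i → WitP S v x f i s p →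
      (∀ e ∈ p, lvlE S v e ≤ i) ∧ ∃ e ∈ p, lvlE S v e = i := by
    intro i s p hi hWit
    obtain ⟨u, u', t, hu, hu', hne, ht1, hti, -, rfl, -⟩ := hWit
    have hl1 : lvlE S v (Et x u i) = i := lvl_Et L (by omega) (by omega)
    have hl2 : lvlE S v (Et x u' t) = t := lvl_Et L ht1 (by omega)
    constructor
    · intro e he
      simp only [Finset.mem_insert, Finset.mem_singleton] at he
      rcases he with rfl | rfl
      · omega
      · omega
    · exact ⟨Et x u i, by simp, hl1⟩
  have hWinj : ∀ i s s' p, 2 ≤ i → WitP S v x f i s p → WitP S v x f i s' p → s = s' := by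
    intro i s s' p hi h1 h2
    obtain ⟨u, u', t, hu, hu', hne, ht1, hti, hs, hp, -⟩ := h1
    obtain ⟨q, q', r, hq, hq', hne', hr1, hri, hs', hp', -⟩ := h2
    have hEtne : Et x u i ≠ Et x u' t := by
      intro hh
      exact Et_indep L huniq hu hu' hne hi ht1 hti (x u i) (by rw [Et]; simp)
        (by rw [← hh, Et]; simp)
    have hpe : ({Et x u i, Et x u' t} : Finset (Sym2 (Fin n))) = {Et x q i, Et x q' r} := by
      rw [← hp, hp']
    rcases pair_eq_cases hEtne hpe with ⟨hA, hB⟩ | ⟨hA, hB⟩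
    · obtain ⟨-, huq⟩ := EtEq L huniq hu hq (by omega) le_rfl (by omega) le_rfl hA
      obtain ⟨htr, huq'⟩ := EtEq L huniq hu' hq' ht1 hti hr1 hri hB
      rw [hs, hs', huq, huq']
    · obtain ⟨hir, huq'⟩ := EtEq L huniq hu hq' (by omega) le_rfl hr1 hri hA
      obtain ⟨hti', huq⟩ := EtEq L huniq hu' hq ht1 hti (by omega) le_rfl hB
      rw [hs, hs', huq, huq', Finset.pair_comm]
  -- the witness image sets
  set Ni : ℕ → Finset (Finset (Sym2 (Fin n))) := fun i => (NAi i).image (wfun i) with hNidef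
  have hNicard : ∀ i, 2 ≤ i → (Ni i).card = (NAi i).card := by
    intro i hi
    rw [hNidef]
    apply Finset.card_image_of_injOn
    intro s hs s' hs' heq
    exact hWinj i s s' (wfun i s) hi (hwfun i hi s hs) (heq ▸ hwfun i hi s' hs')
  have hNiWit : ∀ i, 2 ≤ i → ∀ p ∈ Ni i, ∃ s, WitP S v x f i s p := by
    intro i hi p hp
    rw [hNidef, Finset.mem_image] at hp
    obtain ⟨s, hs, rfl⟩ := hp
    exact ⟨s, hwfun i hi s hs⟩
  set NAll : Finset (Finset (Sym2 (Fin n))) := (Finset.Icc 2 h).biUnion Ni with hNAlldef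
  have hNidisj : ∀ i ∈ Finset.Icc 2 h, ∀ j ∈ Finset.Icc 2 h, i ≠ j →
      Disjoint (Ni i) (Ni j) := by
    intro i hiI j hjI hij
    rw [Finset.mem_Icc] at hiI hjI
    rw [Finset.disjoint_left]
    intro p hpi hpj
    obtain ⟨s, hWi⟩ := hNiWit i hiI.1 p hpi
    obtain ⟨s', hWj⟩ := hNiWit j hjI.1 p hpj
    obtain ⟨hle_i, e, he, hei⟩ := hWlvl i s p hiI.1 hWi
    obtain ⟨hle_j, e', he', hej⟩ := hWlvl j s' p hjI.1 hWj
    have h1 := hle_j e he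
    have h2 := hle_i e' he'
    omega
  have hNAllcard : ∑ i ∈ Finset.Icc 2 h, fdef (a i) ≤ NAll.card := by
    rw [hNAlldef, Finset.card_biUnion hNidisj]
    apply Finset.sum_le_sum
    intro i hiI
    rw [Finset.mem_Icc] at hiI
    rw [hNicard i hiI.1]
    exact hNAicard i hiI.1
  -- membership of witnesses in Pairs, and exclusions
  have hNiP : ∀ i ∈ Finset.Icc 2 h, ∀ p ∈ Ni i, p ∈ Pairs := by
    intro i hiI p hp
    rw [Finset.mem_Icc] at hiI
    obtain ⟨s, hWit⟩ := hNiWit i hiI.1 p hp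
    obtain ⟨e1, e2, rfl, he1, he2, hdisj, -, hne⟩ := hWfacts i s p hiI.1 hWit
    rw [hPairsDef, Finset.mem_powersetCard]
    constructor
    · intro z hz
      simp only [Finset.mem_insert, Finset.mem_singleton] at hz
      rcases hz with rfl | rfl
      · exact SimpleGraph.mem_edgeFinset.mpr he1
      · exact SimpleGraph.mem_edgeFinset.mpr he2
    · rw [Finset.card_insert_of_notMem (by simp [hne]), Finset.card_singleton]
  have hNinotXF : ∀ i ∈ Finset.Icc 2 h, ∀ p ∈ Ni i, p ∉ XF := by
    intro i hiI p hp hpXF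
    rw [Finset.mem_Icc] at hiI
    obtain ⟨s, hWit⟩ := hNiWit i hiI.1 p hp
    obtain ⟨e1, e2, rfl, -, -, -, hnc, hne⟩ := hWfacts i s p hiI.1 hWit
    rw [hXFdef, Finset.mem_filter] at hpXF
    obtain ⟨-, E1, E2, -, -, hdisj', hcr', hpeq⟩ := hpXF
    have hE12 : E1 ≠ E2 := by
      intro hh
      exact hdisj' E1.out.1 (Sym2.out_fst_mem E1) (hh ▸ Sym2.out_fst_mem E1)
    rcases pair_eq_cases hne (hpeq ▸ rfl : ({e1, e2} : Finset (Sym2 (Fin n))) = {E1, E2})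
      with ⟨hA, hB⟩ | ⟨hA, hB⟩
    · rw [← hA, ← hB] at hcr'
      exact hnc hcr'
    · rw [← hA, ← hB] at hcr'
      exact hnc (hcrxsymm _ _ hcr')
  have hNinotAu : ∀ i ∈ Finset.Icc 2 h, ∀ p ∈ Ni i, ∀ u0, p ∉ Au u0 := by
    intro i hiI p hp u0 hpAu
    rw [Finset.mem_Icc] at hiI
    obtain ⟨s, hWit⟩ := hNiWit i hiI.1 p hp
    obtain ⟨e1, e2, rfl, -, -, hdisj, -, -⟩ := hWfacts i s p hiI.1 hWit
    have h1 := (hAuMem u0 _ hpAu e1 (by simp)).2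
    have h2 := (hAuMem u0 _ hpAu e2 (by simp)).2
    exact hdisj u0 h1 h2
  -- XF excluded from AllA
  have hXFindep : ∀ p ∈ XF, ∃ e1 e2 : Sym2 (Fin n), p = {e1, e2} ∧ (∀ z, z ∈ e1 → z ∉ e2) := by
    intro p hp
    rw [hXFdef, Finset.mem_filter] at hp
    obtain ⟨-, e1, e2, -, -, hdisj, -, rfl⟩ := hp
    exact ⟨e1, e2, rfl, hdisj⟩
  have hdXA : Disjoint XF AllA := by
    rw [Finset.disjoint_left]
    intro p hpXF hpA
    rw [hAllAdef, Finset.mem_biUnion] at hpA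
    obtain ⟨u0, -, hpAu⟩ := hpA
    obtain ⟨e1, e2, rfl, hdisj⟩ := hXFindep p hpXF
    exact hdisj u0 (hAuMem u0 _ hpAu e1 (by simp)).2 (hAuMem u0 _ hpAu e2 (by simp)).2
  have hdXN : Disjoint XF NAll := by
    rw [Finset.disjoint_right]
    intro p hpN hpXF
    rw [hNAlldef, Finset.mem_biUnion] at hpN
    obtain ⟨i, hiI, hpNi⟩ := hpN
    exact hNinotXF i hiI p hpNi hpXF
  have hdAN : Disjoint AllA NAll := by
    rw [Finset.disjoint_right]
    intro p hpN hpA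
    rw [hNAlldef, Finset.mem_biUnion] at hpN
    obtain ⟨i, hiI, hpNi⟩ := hpN
    rw [hAllAdef, Finset.mem_biUnion] at hpA
    obtain ⟨u0, -, hpAu⟩ := hpA
    exact hNinotAu i hiI p hpNi u0 hpAu
  -- union bound
  have hXFP : XF ⊆ Pairs := by rw [hXFdef]; exact Finset.filter_subset _ _
  have hAllAP : AllA ⊆ Pairs := by
    rw [hAllAdef]
    apply Finset.biUnion_subset.mpr
    intro u _
    exact hAuP u
  have hNAllP : NAll ⊆ Pairs := by
    rw [hNAlldef]
    apply Finset.biUnion_subset.mpr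
    intro i hiI
    intro p hp
    exact hNiP i hiI p hp
  have hsubP : XF ∪ (AllA ∪ NAll) ⊆ Pairs :=
    Finset.union_subset hXFP (Finset.union_subset hAllAP hNAllP)
  have hdX_AN : Disjoint XF (AllA ∪ NAll) := Finset.disjoint_union_right.mpr ⟨hdXA, hdXN⟩
  have hcards : XF.card + (AllA.card + NAll.card) ≤ Pairs.card := by
    rw [← Finset.card_union_of_disjoint hdAN, ← Finset.card_union_of_disjoint hdX_AN]
    exact Finset.card_le_card hsubP
  have hPairscard : Pairs.card = (n - 1).choose 2 := by
    rw [hPairsDef, Finset.card_powersetCard, hn1]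
  -- final arithmetic
  have hfinal : crossCount S f + (∑ u : Fin n, (S.degree u).choose 2)
      + (∑ i ∈ Finset.Icc 2 h, fdef (a i)) ≤ (n - 1).choose 2 := by
    rw [hcc]
    omega
  have hcast2 : ∑ i ∈ Finset.Icc 2 h,
      ((Nat.choose (a i / 2) 2 : ℤ) + (Nat.choose ((a i + 1) / 2) 2 : ℤ))
      = ((∑ i ∈ Finset.Icc 2 h, fdef (a i) : ℕ) : ℤ) := by
    rw [Nat.cast_sum]
    apply Finset.sum_congr rfl
    intro i _
    rw [fdef]
    push_cast
    ring
  have hcast1 : (∑ u : Fin n, (Nat.choose (S.degree u) 2 : ℤ))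
      = ((∑ u : Fin n, (S.degree u).choose 2 : ℕ) : ℤ) := by
    rw [Nat.cast_sum]
  rw [hcast1, hcast2]
  omega

end SpiderMain
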